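/- Let L be a quantum channel from M_n⊗M_k to M_m, and let ρ and σ be density matrices in M_k. Define the channels L_ρ, L_σ from M_n to M_m by L_ρ(ω) := L(ω⊗ρ) and L_σ(ω) := L(ω⊗σ). Then the normalized diamond distance satisfies (1/2)‖L_ρ − L_σ‖⋄ ≤ (1/2)‖ρ − σ‖₁. -/

import Mathlib

open Matrix Kronecker
open scoped ComplexOrder

noncomputable section

/-- The old Mathlib `Matrix.PosSemidef.sqrt` (removed), spelled out with its old definition. -/
def psdSqrt {n : Type*} [Fintype n] [DecidableEq n] {A : Matrix n n ℂ} (hA : A.PosSemidef) :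
    Matrix n n ℂ :=
  (hA.1.eigenvectorUnitary : Matrix n n ℂ) * diagonal ((↑) ∘ (√·) ∘ hA.1.eigenvalues) *
    (star hA.1.eigenvectorUnitary : Matrix n n ℂ)

/-- The trace norm `‖X‖₁ = Tr[√(X†X)]`. -/
def traceNorm {n : Type*} [Fintype n] [DecidableEq n] (X : Matrix n n ℂ) : ℝ :=
  ((psdSqrt (Matrix.posSemidef_conjTranspose_mul_self X)).trace).re

/-- The extension `id_k ⊗ Φ` of a map on matrices, with the identity on the first factor. -/
def idTensor {k n m : Type*} (Φ : Matrix n n ℂ → Matrix m m ℂ)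
    (M : Matrix (k × n) (k × n) ℂ) : Matrix (k × m) (k × m) ℂ :=
  Matrix.of fun p q => Φ (Matrix.of fun a b => M (p.1, a) (q.1, b)) p.2 q.2

/-- A density matrix: positive semidefinite with unit trace. -/
def IsState {n : Type*} [Fintype n] (ρ : Matrix n n ℂ) : Prop :=
  ρ.PosSemidef ∧ ρ.trace = 1

/-- Normalized diamond distance between two maps on matrices, as the supremum over
bipartite input states (with a reference system of the same dimension as the input)
of the normalized trace distance of the outputs. -/
def dDist {n m : Type*} [Fintype n] [DecidableEq n] [Fintype m] [DecidableEq m]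
    (N M : Matrix n n ℂ → Matrix m m ℂ) : ℝ :=
  sSup {x : ℝ | ∃ ρ : Matrix (n × n) (n × n) ℂ, IsState ρ ∧
    x = (1 / 2) * traceNorm (idTensor N ρ - idTensor M ρ)}

/-- Complete positivity of a linear map on matrices: every finite identity extension
preserves positive semidefiniteness. -/
def IsCP {n m : Type*} [Fintype n] [DecidableEq n] [Fintype m] [DecidableEq m]
    (Φ : Matrix n n ℂ →ₗ[ℂ] Matrix m m ℂ) : Prop :=
  ∀ (r : ℕ) (M : Matrix (Fin r × n) (Fin r × n) ℂ), M.PosSemidef →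
    (idTensor (fun X => Φ X) M).PosSemidef

/-- Trace preservation of a linear map on matrices. -/
def IsTP {n m : Type*} [Fintype n] [Fintype m]
    (Φ : Matrix n n ℂ →ₗ[ℂ] Matrix m m ℂ) : Prop :=
  ∀ X, (Φ X).trace = X.trace

/-- Choi operator of a map on matrices: `Γ^Φ = Σ_{i,j} |i⟩⟨j| ⊗ Φ(|i⟩⟨j|)`. -/
def choi {n m : Type*} [DecidableEq n]
    (Φ : Matrix n n ℂ → Matrix m m ℂ) : Matrix (n × m) (n × m) ℂ :=
  Matrix.of fun p q => Φ (Matrix.single p.1 q.1 1) p.2 q.2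

/-- The swap operator `F = Σ_{i,j} |i⟩⟨j| ⊗ |j⟩⟨i|` on `ℂ^d ⊗ ℂ^d`. -/
def swapOp (d : ℕ) : Matrix (Fin d × Fin d) (Fin d × Fin d) ℂ :=
  Matrix.of fun p q => if p.1 = q.2 ∧ p.2 = q.1 then 1 else 0

/-- The swap channel `S^d(X) = F X F†`. -/
def swapCh (d : ℕ) (X : Matrix (Fin d × Fin d) (Fin d × Fin d) ℂ) :
    Matrix (Fin d × Fin d) (Fin d × Fin d) ℂ :=
  swapOp d * X * (swapOp d)ᴴ

/-- Square root of a positive semidefinite matrix (junk value `0` otherwise). -/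
def msqrt {n : Type*} [Fintype n] [DecidableEq n] (X : Matrix n n ℂ) : Matrix n n ℂ :=
  letI := Classical.propDecidable X.PosSemidef
  if h : X.PosSemidef then psdSqrt h else 0

/-- Fidelity `F(ω,τ) = ‖√ω √τ‖₁²`. -/
def fid {n : Type*} [Fintype n] [DecidableEq n] (ω τ : Matrix n n ℂ) : ℝ :=
  (traceNorm (msqrt ω * msqrt τ)) ^ 2

/-- Channel fidelity: the infimum of output fidelities over bipartite input states. -/
def cFid {n m : Type*} [Fintype n] [DecidableEq n] [Fintype m] [DecidableEq m]
    (N M : Matrix n n ℂ → Matrix m m ℂ) : ℝ :=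
  sInf {x : ℝ | ∃ ρ : Matrix (n × n) (n × n) ℂ, IsState ρ ∧
    x = fid (idTensor N ρ) (idTensor M ρ)}

/-- Partial trace over the second (right) factor. -/
def ptrR {a b : Type*} [Fintype b] (X : Matrix (a × b) (a × b) ℂ) : Matrix a a ℂ :=
  Matrix.of fun i j => ∑ k, X (i, k) (j, k)

/-- Unnormalized maximally entangled operator `Γ = |Γ⟩⟨Γ|` on `ℂ^D ⊗ ℂ^D`. -/
def gamOp (D : ℕ) : Matrix (Fin D × Fin D) (Fin D × Fin D) ℂ :=
  Matrix.of fun p q => if p.1 = p.2 ∧ q.1 = q.2 then 1 else 0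

/-- Maximally entangled state `Φ = Γ/D` on `ℂ^D ⊗ ℂ^D`. -/
def phiD (D : ℕ) : Matrix (Fin D × Fin D) (Fin D × Fin D) ℂ :=
  ((D : ℂ))⁻¹ • gamOp D

/-- Partial transpose over Bob's factors `B, B̂, B'` of a matrix on the six factors
`(A ⊗ B) ⊗ (Â ⊗ B̂) ⊗ (A' ⊗ B')`. -/
def ptB6 {A B AH BH A' B' : Type*}
    (X : Matrix (((A × B) × (AH × BH)) × (A' × B')) (((A × B) × (AH × BH)) × (A' × B')) ℂ) :
    Matrix (((A × B) × (AH × BH)) × (A' × B')) (((A × B) × (AH × BH)) × (A' × B')) ℂ :=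
  Matrix.of fun p q =>
    X (((p.1.1.1, q.1.1.2), (p.1.2.1, q.1.2.2)), (p.2.1, q.2.2))
      (((q.1.1.1, p.1.1.2), (q.1.2.1, p.1.2.2)), (q.2.1, p.2.2))

/-- Partial transpose over the factor `B̂` of a matrix on `Â ⊗ B̂`. -/
def ptBh2 {AH BH : Type*} (X : Matrix (AH × BH) (AH × BH) ℂ) : Matrix (AH × BH) (AH × BH) ℂ :=
  Matrix.of fun g g' => X (g.1, g'.2) (g'.1, g.2)

/-- Contraction `Tr_{ÂB̂}[(T_{ÂB̂}(ρ) ⊗ I) P]` of a six-factor operator with a resource state,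
yielding the Choi operator of the induced channel `ω ↦ P(ω ⊗ ρ)`. -/
def contractRes {A B AH BH A' B' : Type*} [Fintype AH] [Fintype BH]
    (ρ : Matrix (AH × BH) (AH × BH) ℂ)
    (P : Matrix (((A × B) × (AH × BH)) × (A' × B')) (((A × B) × (AH × BH)) × (A' × B')) ℂ) :
    Matrix ((A × B) × (A' × B')) ((A × B) × (A' × B')) ℂ :=
  Matrix.of fun p q => ∑ h, ∑ h', ρ h h' * P ((p.1, h), p.2) ((q.1, h'), q.2)


section AuxLemmas

open scoped MatrixOrder in
lemma psdSqrt_eq_sqrt {d : Type*} [Fintype d] [DecidableEq d] {A : Matrix d d ℂ}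
    (hA : A.PosSemidef) : psdSqrt hA = CFC.sqrt A := by
  rw [CFC.sqrt_eq_real_sqrt A hA.nonneg, cfcₙ_eq_cfc, hA.1.cfc_eq, IsHermitian.cfc,
    Unitary.conjStarAlgAut_apply]
  rfl

open scoped MatrixOrder in
lemma psdSqrt_psd {d : Type*} [Fintype d] [DecidableEq d] {A : Matrix d d ℂ}
    (hA : A.PosSemidef) : (psdSqrt hA).PosSemidef := by
  rw [psdSqrt_eq_sqrt]
  exact (CFC.sqrt_nonneg A).posSemidef

open scoped MatrixOrder in
lemma psdSqrt_mul_self {d : Type*} [Fintype d] [DecidableEq d] {A : Matrix d d ℂ}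
    (hA : A.PosSemidef) : psdSqrt hA * psdSqrt hA = A := by
  rw [psdSqrt_eq_sqrt]
  exact CFC.sqrt_mul_sqrt_self A hA.nonneg

open scoped MatrixOrder in
lemma psdSqrt_unique {d : Type*} [Fintype d] [DecidableEq d] {A B : Matrix d d ℂ}
    (hA : A.PosSemidef) (hB : B.PosSemidef) (h : A ^ 2 = B) : A = psdSqrt hB := by
  rw [psdSqrt_eq_sqrt]
  exact (CFC.sqrt_unique (by rw [← sq]; exact h) hA.nonneg).symm

-- basic: trace re nonneg
lemma trace_re_nonneg {d : Type*} [Fintype d] [DecidableEq d] {A : Matrix d d ℂ} (hA : A.PosSemidef) :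
    0 ≤ A.trace.re := by
  rw [Matrix.trace, Complex.re_sum]
  refine Finset.sum_nonneg fun i _ => ?_
  have := hA.re_dotProduct_nonneg (Pi.single i 1)
  simpa [dotProduct, Pi.single_apply, Matrix.mulVec, Finset.sum_ite_eq',
    Matrix.diag] using this

lemma traceNorm_nonneg {d : Type*} [Fintype d] [DecidableEq d] (X : Matrix d d ℂ) :
    0 ≤ traceNorm X :=
  trace_re_nonneg (psdSqrt_psd (Matrix.posSemidef_conjTranspose_mul_self X))

-- conjDiag toolkit
variable {d : Type*} [Fintype d] [DecidableEq d]

def conjDiag (U : Matrix d d ℂ) (v : d → ℝ) : Matrix d d ℂ :=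
  U * Matrix.diagonal (fun i => (v i : ℂ)) * star U

variable {U : Matrix d d ℂ} (hU : U ∈ Matrix.unitaryGroup d ℂ)

lemma conjDiag_psd (v : d → ℝ) (hv : ∀ i, 0 ≤ v i) : (conjDiag U v).PosSemidef := by
  have : (Matrix.diagonal (fun i => ((v i : ℂ)))).PosSemidef :=
    Matrix.PosSemidef.diagonal fun i => by
      simpa using Complex.zero_le_real.mpr (hv i)
  simpa [conjDiag, Matrix.star_eq_conjTranspose] using this.mul_mul_conjTranspose_same U

include hU

lemma conjDiag_mul (v w : d → ℝ) :
    conjDiag U v * conjDiag U w = conjDiag U (v * w) := by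
  have h1 : star U * U = 1 := (Matrix.mem_unitaryGroup_iff').mp hU
  simp only [conjDiag, Matrix.mul_assoc]
  rw [← Matrix.mul_assoc (star U) U, h1, Matrix.one_mul,
    ← Matrix.mul_assoc (Matrix.diagonal _), Matrix.diagonal_mul_diagonal]
  simp [Matrix.mul_assoc]

lemma conjDiag_trace_re (v : d → ℝ) : (conjDiag U v).trace.re = ∑ i, v i := by
  have h1 : star U * U = 1 := (Matrix.mem_unitaryGroup_iff').mp hU
  rw [conjDiag, Matrix.trace_mul_cycle, h1, Matrix.one_mul, Matrix.trace_diagonal,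
    Complex.re_sum]
  simp

lemma conjDiag_sub (v w : d → ℝ) :
    conjDiag U v - conjDiag U w = conjDiag U (v - w) := by
  simp only [conjDiag, ← Matrix.sub_mul, ← Matrix.mul_sub, Matrix.diagonal_sub]
  norm_cast

lemma conjDiag_add (v w : d → ℝ) :
    conjDiag U v + conjDiag U w = conjDiag U (v + w) := by
  simp only [conjDiag, ← Matrix.add_mul, ← Matrix.mul_add, Matrix.diagonal_add]
  norm_cast

lemma conjDiag_one : conjDiag U 1 = 1 := by
  have h2 : U * star U = 1 := (Matrix.mem_unitaryGroup_iff).mp hU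
  simp [conjDiag, h2]


-- spectral theorem in conjDiag form
omit hU in
lemma spectral_conjDiag {H : Matrix d d ℂ} (hH : H.IsHermitian) :
    H = conjDiag (hH.eigenvectorUnitary : Matrix d d ℂ) hH.eigenvalues := by
  conv_lhs => rw [hH.spectral_theorem]
  rw [Unitary.conjStarAlgAut_apply]
  rfl

omit hU in
lemma traceNorm_hermitian {H : Matrix d d ℂ} (hH : H.IsHermitian) :
    traceNorm H = ∑ i, |hH.eigenvalues i| := by
  have hU : (hH.eigenvectorUnitary : Matrix d d ℂ) ∈ Matrix.unitaryGroup d ℂ :=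
    hH.eigenvectorUnitary.2
  have hA : (conjDiag (hH.eigenvectorUnitary : Matrix d d ℂ)
      (fun i => |hH.eigenvalues i|)).PosSemidef :=
    conjDiag_psd _ (fun i => abs_nonneg _)
  have habs : ((fun i => |hH.eigenvalues i|) * fun i => |hH.eigenvalues i|)
      = hH.eigenvalues * hH.eigenvalues := funext fun i => abs_mul_abs_self _
  have hsq : (conjDiag (hH.eigenvectorUnitary : Matrix d d ℂ)
      (fun i => |hH.eigenvalues i|)) ^ 2 = Hᴴ * H := by
    rw [hH.eq, sq, conjDiag_mul hU, habs, ← conjDiag_mul hU, ← spectral_conjDiag hH]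
  have := psdSqrt_unique hA (Matrix.posSemidef_conjTranspose_mul_self H) hsq
  rw [traceNorm, ← this, conjDiag_trace_re hU]


omit hU in
lemma trace_mul_psd_re_nonneg {X Y : Matrix d d ℂ} (hX : X.PosSemidef) (hY : Y.PosSemidef) :
    0 ≤ ((X * Y).trace).re := by
  have hs := psdSqrt_psd hX
  have h1 : X * Y = psdSqrt hX * (psdSqrt hX * Y) := by rw [← Matrix.mul_assoc, psdSqrt_mul_self hX]
  rw [h1, Matrix.trace_mul_comm]
  have h2 : psdSqrt hX * Y * psdSqrt hX = psdSqrt hX * Y * (psdSqrt hX)ᴴ := by rw [hs.1.eq]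
  have := hY.mul_mul_conjTranspose_same (psdSqrt hX)
  rw [← h2] at this
  exact trace_re_nonneg (by simpa [Matrix.mul_assoc] using this)

omit hU in
lemma traceNorm_sub_le {A B : Matrix d d ℂ} (hA : A.PosSemidef) (hB : B.PosSemidef) :
    traceNorm (A - B) ≤ A.trace.re + B.trace.re := by
  have hH : (A - B).IsHermitian := hA.1.sub hB.1
  have hU : (hH.eigenvectorUnitary : Matrix d d ℂ) ∈ Matrix.unitaryGroup d ℂ :=
    hH.eigenvectorUnitary.2
  set U : Matrix d d ℂ := (hH.eigenvectorUnitary : Matrix d d ℂ) with hUdef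
  set lam : d → ℝ := hH.eigenvalues with hlam
  set e : d → ℝ := fun i => if 0 ≤ lam i then 1 else 0 with he
  have he0 : ∀ i, 0 ≤ e i := fun i => by rw [he]; dsimp only; split <;> norm_num
  have he1 : ∀ i, 0 ≤ 1 - e i := fun i => by rw [he]; dsimp only; split <;> norm_num
  have hP : (conjDiag U e).PosSemidef := conjDiag_psd _ he0
  have hQ : (conjDiag U (fun i => 1 - e i)).PosSemidef := conjDiag_psd _ he1
  have hPQ : conjDiag U e + conjDiag U (fun i => 1 - e i) = 1 := by
    rw [conjDiag_add hU]
    have : (e + fun i => 1 - e i) = 1 := by funext i; simp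
    rw [this, conjDiag_one hU]
  have hPH : conjDiag U e * (A - B) = conjDiag U (e * lam) := by
    rw [← conjDiag_mul hU, hUdef, hlam]
    congr 1
    exact spectral_conjDiag hH
  have hQH : conjDiag U (fun i => 1 - e i) * (A - B) = conjDiag U ((fun i => 1 - e i) * lam) := by
    rw [← conjDiag_mul hU, hUdef, hlam]
    congr 1
    exact spectral_conjDiag hH
  -- split traces
  have hsplitP : (conjDiag U e * (A - B)).trace.re
      = (conjDiag U e * A).trace.re - (conjDiag U e * B).trace.re := by
    rw [Matrix.mul_sub, Matrix.trace_sub, Complex.sub_re]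
  have hsplitQ : (conjDiag U (fun i => 1 - e i) * (A - B)).trace.re
      = (conjDiag U (fun i => 1 - e i) * A).trace.re
        - (conjDiag U (fun i => 1 - e i) * B).trace.re := by
    rw [Matrix.mul_sub, Matrix.trace_sub, Complex.sub_re]
  have htotA : (conjDiag U e * A).trace.re + (conjDiag U (fun i => 1 - e i) * A).trace.re
      = A.trace.re := by
    rw [← Complex.add_re, ← Matrix.trace_add, ← Matrix.add_mul, hPQ, Matrix.one_mul]
  have htotB : (conjDiag U e * B).trace.re + (conjDiag U (fun i => 1 - e i) * B).trace.re
      = B.trace.re := by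
    rw [← Complex.add_re, ← Matrix.trace_add, ← Matrix.add_mul, hPQ, Matrix.one_mul]
  have n1 := trace_mul_psd_re_nonneg hP hA
  have n2 := trace_mul_psd_re_nonneg hP hB
  have n3 := trace_mul_psd_re_nonneg hQ hA
  have n4 := trace_mul_psd_re_nonneg hQ hB
  have habs : ∑ i, |lam i| = ∑ i, e i * lam i - ∑ i, (1 - e i) * lam i := by
    rw [← Finset.sum_sub_distrib]
    refine Finset.sum_congr rfl fun i _ => ?_
    rw [he]; dsimp only
    rcases le_or_gt 0 (lam i) with h | h
    · rw [if_pos h, abs_of_nonneg h]; ring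
    · rw [if_neg (not_le.mpr h), abs_of_neg h]; ring
  have t1 : (conjDiag U e * (A - B)).trace.re = ∑ i, e i * lam i := by
    rw [hPH, conjDiag_trace_re hU]; rfl
  have t2 : (conjDiag U (fun i => 1 - e i) * (A - B)).trace.re = ∑ i, (1 - e i) * lam i := by
    rw [hQH, conjDiag_trace_re hU]; rfl
  rw [traceNorm_hermitian hH]
  rw [hsplitP] at t1
  rw [hsplitQ] at t2
  show ∑ i, |lam i| ≤ A.trace.re + B.trace.re
  rw [habs]
  linarith

omit hU in
lemma exists_psd_decomp {H : Matrix d d ℂ} (hH : H.IsHermitian) :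
    ∃ P Q : Matrix d d ℂ, P.PosSemidef ∧ Q.PosSemidef ∧ H = P - Q ∧
      P.trace.re + Q.trace.re = traceNorm H := by
  have hU : (hH.eigenvectorUnitary : Matrix d d ℂ) ∈ Matrix.unitaryGroup d ℂ :=
    hH.eigenvectorUnitary.2
  refine ⟨conjDiag (hH.eigenvectorUnitary : Matrix d d ℂ) (fun i => max (hH.eigenvalues i) 0),
    conjDiag (hH.eigenvectorUnitary : Matrix d d ℂ) (fun i => max (-hH.eigenvalues i) 0),
    conjDiag_psd _ (fun i => le_max_right _ _), conjDiag_psd _ (fun i => le_max_right _ _),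
    ?_, ?_⟩
  · rw [conjDiag_sub hU]
    have : ((fun i => max (hH.eigenvalues i) 0) - fun i => max (-hH.eigenvalues i) 0)
        = hH.eigenvalues := by
      funext i
      simp only [Pi.sub_apply]
      rcases le_or_gt 0 (hH.eigenvalues i) with h | h
      · rw [max_eq_left h, max_eq_right (neg_nonpos.mpr h)]; ring
      · rw [max_eq_right h.le, max_eq_left (by linarith)]; ring
    rw [this]
    exact spectral_conjDiag hH
  · rw [conjDiag_trace_re hU, conjDiag_trace_re hU, traceNorm_hermitian hH,
      ← Finset.sum_add_distrib]
    refine Finset.sum_congr rfl fun i _ => ?_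
    rcases le_or_gt 0 (hH.eigenvalues i) with h | h
    · rw [abs_of_nonneg h, max_eq_left h, max_eq_right (by linarith)]; ring
    · rw [abs_of_neg h, max_eq_right h.le, max_eq_left (by linarith)]; ring


end AuxLemmas

lemma idTensor_trace {r n m : Type*} [Fintype r] [Fintype n] [Fintype m]
    (Φ : Matrix n n ℂ → Matrix m m ℂ) (hΦ : ∀ X, (Φ X).trace = X.trace)
    (M : Matrix (r × n) (r × n) ℂ) : (idTensor Φ M).trace = M.trace := by
  simp only [Matrix.trace, Matrix.diag, Fintype.sum_prod_type, idTensor, Matrix.of_apply]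
  refine Finset.sum_congr rfl fun i _ => ?_
  have := hΦ (Matrix.of fun a b => M (i, a) (i, b))
  simpa [Matrix.trace, Matrix.diag] using this

lemma idTensor_cp {r n m : Type*} [Fintype r] [DecidableEq r] [Fintype n] [DecidableEq n]
    [Fintype m] [DecidableEq m]
    (L : Matrix n n ℂ →ₗ[ℂ] Matrix m m ℂ) (hCP : IsCP L)
    (M : Matrix (r × n) (r × n) ℂ) (hM : M.PosSemidef) :
    (idTensor (fun X => L X) M).PosSemidef := by
  classical
  let e := Fintype.equivFin r
  have hM' := hM.submatrix (fun p : Fin (Fintype.card r) × n => (e.symm p.1, p.2))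
  have h := hCP (Fintype.card r) _ hM'
  have heq : idTensor (fun X => L X) M
      = (idTensor (fun X => L X)
          (M.submatrix (fun p : Fin (Fintype.card r) × n => (e.symm p.1, p.2))
            (fun p => (e.symm p.1, p.2)))).submatrix
        (fun p : r × m => (e p.1, p.2)) (fun p => (e p.1, p.2)) := by
    ext p q
    simp only [idTensor, Matrix.of_apply, Matrix.submatrix_apply]
    have hXY : (Matrix.of fun a b => M (p.1, a) (q.1, b))
        = Matrix.of fun a b =>
            M.submatrix (fun p : Fin (Fintype.card r) × n => (e.symm p.1, p.2))
              (fun p => (e.symm p.1, p.2)) (e p.1, a) (e q.1, b) := by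
      ext a b
      simp [Matrix.submatrix_apply]
    rw [hXY]
    simp [Matrix.submatrix_apply]
  rw [heq]
  exact h.submatrix _

open Kronecker in
lemma kron_psd {a b : Type*} [Fintype a] [Fintype b] [DecidableEq a] [DecidableEq b]
    {μ : Matrix a a ℂ} {Δ : Matrix b b ℂ} (hμ : μ.PosSemidef) (hΔ : Δ.PosSemidef) :
    (μ ⊗ₖ Δ).PosSemidef := by
  exact hμ.kronecker hΔ


/-- feeding two different resource states into the same channel produces
channels whose normalized diamond distance is at most the normalized trace distance
of the resource states. -/
theorem stmt2 {n k m : Type*} [Fintype n] [DecidableEq n] [Fintype k] [DecidableEq k]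
    [Fintype m] [DecidableEq m]
    (L : Matrix (n × k) (n × k) ℂ →ₗ[ℂ] Matrix m m ℂ) (hCP : IsCP L) (hTP : IsTP L)
    (ρ σ : Matrix k k ℂ) (hρ : IsState ρ) (hσ : IsState σ) :
    dDist (fun ω => L (ω ⊗ₖ ρ)) (fun ω => L (ω ⊗ₖ σ)) ≤ (1 / 2) * traceNorm (ρ - σ) := by
  obtain ⟨Δp, Δm, hΔp, hΔm, hdec, htr⟩ := exists_psd_decomp (hρ.1.1.sub hσ.1.1)
  rw [dDist]
  apply Real.sSup_le
  · rintro x ⟨μ, hμ, rfl⟩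
    -- the two PSD output operators
    have hkron : ∀ (ω : Matrix n n ℂ), L (ω ⊗ₖ ρ) - L (ω ⊗ₖ σ) = L (ω ⊗ₖ Δp) - L (ω ⊗ₖ Δm) := by
      intro ω
      rw [← map_sub, ← map_sub]
      congr 1
      ext pq rs
      simp only [Matrix.sub_apply, Matrix.kroneckerMap_apply]
      have h : ρ pq.2 rs.2 - σ pq.2 rs.2 = Δp pq.2 rs.2 - Δm pq.2 rs.2 := by
        rw [← Matrix.sub_apply, ← Matrix.sub_apply, hdec]
      linear_combination ω pq.1 rs.1 * h
    have hdiff : idTensor (fun ω => L (ω ⊗ₖ ρ)) μ - idTensor (fun ω => L (ω ⊗ₖ σ)) μ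
        = idTensor (fun ω => L (ω ⊗ₖ Δp)) μ - idTensor (fun ω => L (ω ⊗ₖ Δm)) μ := by
      ext p q
      simp only [Matrix.sub_apply, idTensor, Matrix.of_apply]
      rw [← Matrix.sub_apply, hkron, Matrix.sub_apply]
    -- rewrite each term as a global idTensor of L applied to a PSD matrix
    have hre : ∀ (Δ : Matrix k k ℂ),
        idTensor (fun ω => L (ω ⊗ₖ Δ)) μ
          = idTensor (fun X => L X)
              ((μ ⊗ₖ Δ).submatrix (fun p : n × (n × k) => ((p.1, p.2.1), p.2.2))
                (fun p => ((p.1, p.2.1), p.2.2))) := by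
      intro Δ
      ext p q
      simp only [idTensor, Matrix.of_apply]
      have hXY : (Matrix.of fun a b => μ (p.1, a) (q.1, b)) ⊗ₖ Δ
          = Matrix.of fun a b : n × k =>
              (μ ⊗ₖ Δ).submatrix (fun p : n × (n × k) => ((p.1, p.2.1), p.2.2))
                (fun p => ((p.1, p.2.1), p.2.2)) (p.1, a) (q.1, b) := by
        ext a b
        simp [Matrix.submatrix_apply, Matrix.kroneckerMap_apply]
      rw [hXY]
    have hpsd : ∀ (Δ : Matrix k k ℂ), Δ.PosSemidef →
        (idTensor (fun ω => L (ω ⊗ₖ Δ)) μ).PosSemidef := by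
      intro Δ hΔ
      rw [hre]
      exact idTensor_cp L hCP _ ((kron_psd hμ.1 hΔ).submatrix _)
    have htrace : ∀ (Δ : Matrix k k ℂ),
        (idTensor (fun ω => L (ω ⊗ₖ Δ)) μ).trace = Δ.trace := by
      intro Δ
      rw [hre, idTensor_trace _ hTP]
      have hsub : ((μ ⊗ₖ Δ).submatrix (fun p : n × (n × k) => ((p.1, p.2.1), p.2.2))
          (fun p => ((p.1, p.2.1), p.2.2))).trace = (μ ⊗ₖ Δ).trace := by
        rw [Matrix.trace, Matrix.trace]
        exact Fintype.sum_equiv (Equiv.prodAssoc n n k).symm _ _ (fun p => rfl)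
      rw [hsub, Matrix.trace_kronecker, hμ.2, one_mul]
    have hbound := traceNorm_sub_le (hpsd Δp hΔp) (hpsd Δm hΔm)
    rw [hdiff]
    rw [htrace Δp, htrace Δm] at hbound
    have : Δp.trace.re + Δm.trace.re = traceNorm (ρ - σ) := htr
    calc (1:ℝ)/2 * traceNorm (idTensor (fun ω => L (ω ⊗ₖ Δp)) μ
            - idTensor (fun ω => L (ω ⊗ₖ Δm)) μ)
        ≤ 1/2 * (Δp.trace.re + Δm.trace.re) := by linarith
      _ = 1/2 * traceNorm (ρ - σ) := by rw [this]
  · exact mul_nonneg (by norm_num) (traceNorm_nonneg _)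


end
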